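/- Let n ≥ 2. The n(n−1) × (n−1)² integer matrix whose rows, indexed by the ordered pairs (i,j) with i ≠ j in [n], are the matrices M̄_{i,j} written out as vectors of length (n−1)², is totally unimodular: every square submatrix of it has determinant equal to 0, 1 or −1. -/
import Mathlib


open Finset

/-- The integer matrix `M̄_{i,j}` (for `i ≠ j` in `[n]`, the last index playing the role of `n`). -/
def MbarZ (n : ℕ) (i j : Fin n) : Matrix (Fin (n - 1)) (Fin (n - 1)) ℤ :=
  Matrix.of fun a b =>
    if (a : ℕ) = (i : ℕ) ∧ (b : ℕ) = (j : ℕ) then 1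
    else if (a : ℕ) = (i : ℕ) ∧ (j : ℕ) = n - 1 then -1
    else if (i : ℕ) = n - 1 ∧ (b : ℕ) = (j : ℕ) then -1
    else 0

/-- The `n(n-1) × (n-1)²` matrix whose rows, indexed by ordered pairs `(i,j)` with `i ≠ j`,
are the matrices `M̄_{i,j}` written out as vectors of length `(n-1)²`. -/
def bigM (n : ℕ) :
    Matrix {e : Fin n × Fin n // e.1 ≠ e.2} (Fin (n - 1) × Fin (n - 1)) ℤ :=
  Matrix.of fun e ab => MbarZ n e.1.1 e.1.2 ab.1 ab.2

namespace TUaux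

lemma mem3_iff {a : ℤ} : a ∈ ({0,1,-1} : Set ℤ) ↔ a = 0 ∨ a = 1 ∨ a = -1 := by
  simp [Set.mem_insert_iff]

lemma mul_mem3 {a b : ℤ} (ha : a ∈ ({0,1,-1} : Set ℤ)) (hb : b ∈ ({0,1,-1} : Set ℤ)) :
    a * b ∈ ({0,1,-1} : Set ℤ) := by
  rw [mem3_iff] at *
  rcases ha with h | h | h <;> rcases hb with h' | h' | h' <;> simp [h, h']

lemma pow_neg_one_mem3 (m : ℕ) : ((-1 : ℤ) ^ m) ∈ ({0,1,-1} : Set ℤ) := by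
  rw [mem3_iff]
  rcases Nat.even_or_odd m with h | h
  · simp [h.neg_one_pow]
  · simp [h.neg_one_pow]

lemma pair_eq {m m' : ℕ} {e f : Fin m × Fin m'} (h1 : (e.1 : ℕ) = (f.1 : ℕ))
    (h2 : (e.2 : ℕ) = (f.2 : ℕ)) : e = f := by
  cases e; cases f
  simp only [Prod.mk.injEq]
  exact ⟨Fin.val_injective h1, Fin.val_injective h2⟩

lemma det_mem3_row_pivot {k : ℕ} (S : Matrix (Fin (k+1)) (Fin (k+1)) ℤ) (p q : Fin (k+1))
    (h0 : ∀ j, j ≠ q → S p j = 0) (hval : S p q ∈ ({0,1,-1} : Set ℤ))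
    (hminor : (S.submatrix p.succAbove q.succAbove).det ∈ ({0,1,-1} : Set ℤ)) :
    S.det ∈ ({0,1,-1} : Set ℤ) := by
  rw [Matrix.det_succ_row S p, Finset.sum_eq_single q]
  · exact mul_mem3 (mul_mem3 (pow_neg_one_mem3 _) hval) hminor
  · intro j _ hj
    rw [h0 j hj]; ring
  · intro h; exact absurd (Finset.mem_univ q) h

lemma det_mem3_col_pivot {k : ℕ} (S : Matrix (Fin (k+1)) (Fin (k+1)) ℤ) (p q : Fin (k+1))
    (h0 : ∀ i, i ≠ p → S i q = 0) (hval : S p q ∈ ({0,1,-1} : Set ℤ))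
    (hminor : (S.submatrix p.succAbove q.succAbove).det ∈ ({0,1,-1} : Set ℤ)) :
    S.det ∈ ({0,1,-1} : Set ℤ) := by
  rw [Matrix.det_succ_column S q, Finset.sum_eq_single p]
  · exact mul_mem3 (mul_mem3 (pow_neg_one_mem3 _) hval) hminor
  · intro i _ hi
    rw [h0 i hi]; ring
  · intro h; exact absurd (Finset.mem_univ p) h

lemma bigM_entry_mem3 (n : ℕ) (e : {e : Fin n × Fin n // e.1 ≠ e.2})
    (ab : Fin (n-1) × Fin (n-1)) : bigM n e ab ∈ ({0,1,-1} : Set ℤ) := by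
  rw [mem3_iff]
  unfold bigM MbarZ
  simp only [Matrix.of_apply]
  split_ifs <;> simp

lemma main (n : ℕ) : ∀ (k : ℕ) (r : Fin k → {e : Fin n × Fin n // e.1 ≠ e.2})
    (c : Fin k → Fin (n-1) × Fin (n-1)), Function.Injective r → Function.Injective c →
    ((bigM n).submatrix r c).det ∈ ({0,1,-1} : Set ℤ) := by
  intro k
  induction k with
  | zero =>
    intro r c _ _
    rw [mem3_iff]
    right; left
    exact Matrix.det_fin_zero
  | succ k ih =>
    intro r c hr hc
    set S := (bigM n).submatrix r c with hS
    have hSpq : ∀ p q, S p q =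
        (if ((c q).1 : ℕ) = ((r p).1.1 : ℕ) ∧ ((c q).2 : ℕ) = ((r p).1.2 : ℕ) then 1
         else if ((c q).1 : ℕ) = ((r p).1.1 : ℕ) ∧ ((r p).1.2 : ℕ) = n - 1 then -1
         else if ((r p).1.1 : ℕ) = n - 1 ∧ ((c q).2 : ℕ) = ((r p).1.2 : ℕ) then -1
         else 0) := fun p q => rfl
    have hmem : ∀ p q, S p q ∈ ({0,1,-1} : Set ℤ) := fun p q => bigM_entry_mem3 n (r p) (c q)
    by_cases h1 : ∃ p, ((r p).1.1 : ℕ) ≠ n - 1 ∧ ((r p).1.2 : ℕ) ≠ n - 1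
    · -- a singleton-type row exists
      obtain ⟨p, hi, hj⟩ := h1
      have hrow : ∀ q, S p q =
          if ((c q).1 : ℕ) = ((r p).1.1 : ℕ) ∧ ((c q).2 : ℕ) = ((r p).1.2 : ℕ) then 1 else 0 := by
        intro q
        by_cases hq : ((c q).1 : ℕ) = ((r p).1.1 : ℕ) ∧ ((c q).2 : ℕ) = ((r p).1.2 : ℕ)
        · rw [hSpq, if_pos hq, if_pos hq]
        · rw [hSpq, if_neg hq, if_neg (fun h => hj h.2), if_neg (fun h => hi h.1), if_neg hq]
      by_cases h2 : ∃ q, ((c q).1 : ℕ) = ((r p).1.1 : ℕ) ∧ ((c q).2 : ℕ) = ((r p).1.2 : ℕ)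
      · obtain ⟨q, hq⟩ := h2
        have h0 : ∀ j, j ≠ q → S p j = 0 := by
          intro j hjq
          rw [hrow, if_neg]
          intro h
          exact hjq (hc (pair_eq (h.1.trans hq.1.symm) (h.2.trans hq.2.symm)))
        exact det_mem3_row_pivot S p q h0 (hmem p q)
          (ih (r ∘ p.succAbove) (c ∘ q.succAbove)
            (hr.comp (Fin.succAbove_right_injective))
            (hc.comp (Fin.succAbove_right_injective)))
      · rw [mem3_iff]
        left
        exact Matrix.det_eq_zero_of_row_eq_zero p
          (fun j => by rw [hrow, if_neg (fun h => h2 ⟨j, h⟩)])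
    · -- all rows are row-type or column-type
      push_neg at h1
      have hcolT : ∀ p, ((r p).1.2 : ℕ) ≠ n - 1 → ((r p).1.1 : ℕ) = n - 1 := by
        intro p h
        by_contra h'
        exact h (h1 p h')
      have hrowT : ∀ p, ((r p).1.2 : ℕ) = n - 1 → ((r p).1.1 : ℕ) ≠ n - 1 := by
        intro p hj h
        exact (r p).2 (Fin.val_injective (h.trans hj.symm))
      have hrowEnt : ∀ p q, ((r p).1.2 : ℕ) = n - 1 →
          S p q = if ((c q).1 : ℕ) = ((r p).1.1 : ℕ) then -1 else 0 := by
        intro p q hj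
        have hi := hrowT p hj
        have hb : ((c q).2 : ℕ) ≠ ((r p).1.2 : ℕ) := by
          have h2 := (c q).2.isLt
          omega
        rw [hSpq, if_neg (fun h => hb h.2)]
        by_cases ha : ((c q).1 : ℕ) = ((r p).1.1 : ℕ)
        · rw [if_pos ⟨ha, hj⟩, if_pos ha]
        · rw [if_neg (fun h => ha h.1), if_neg (fun h => hi h.1), if_neg ha]
      have hcolEnt : ∀ p q, ((r p).1.2 : ℕ) ≠ n - 1 →
          S p q = if ((c q).2 : ℕ) = ((r p).1.2 : ℕ) then -1 else 0 := by
        intro p q hj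
        have hi := hcolT p hj
        have ha : ((c q).1 : ℕ) ≠ ((r p).1.1 : ℕ) := by
          have h2 := (c q).1.isLt
          omega
        rw [hSpq, if_neg (fun h => ha h.1), if_neg (fun h => ha h.1)]
        by_cases hb : ((c q).2 : ℕ) = ((r p).1.2 : ℕ)
        · rw [if_pos ⟨hi, hb⟩, if_pos hb]
        · rw [if_neg (fun h => hb h.2), if_neg hb]
      have huniq_row : ∀ p p' q, ((r p).1.2 : ℕ) = n - 1 → ((r p').1.2 : ℕ) = n - 1 →
          S p q ≠ 0 → S p' q ≠ 0 → p = p' := by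
        intro p p' q hp hp' hnz hnz'
        rw [hrowEnt p q hp] at hnz
        rw [hrowEnt p' q hp'] at hnz'
        have h1' : ((c q).1 : ℕ) = ((r p).1.1 : ℕ) := by
          by_contra h; exact hnz (if_neg h)
        have h2' : ((c q).1 : ℕ) = ((r p').1.1 : ℕ) := by
          by_contra h; exact hnz' (if_neg h)
        exact hr (Subtype.ext (pair_eq (h1'.symm.trans h2') (hp.trans hp'.symm)))
      have huniq_col : ∀ p p' q, ((r p).1.2 : ℕ) ≠ n - 1 → ((r p').1.2 : ℕ) ≠ n - 1 →
          S p q ≠ 0 → S p' q ≠ 0 → p = p' := by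
        intro p p' q hp hp' hnz hnz'
        rw [hcolEnt p q hp] at hnz
        rw [hcolEnt p' q hp'] at hnz'
        have h1' : ((c q).2 : ℕ) = ((r p).1.2 : ℕ) := by
          by_contra h; exact hnz (if_neg h)
        have h2' : ((c q).2 : ℕ) = ((r p').1.2 : ℕ) := by
          by_contra h; exact hnz' (if_neg h)
        exact hr (Subtype.ext (pair_eq ((hcolT p hp).trans (hcolT p' hp').symm)
          (h1'.symm.trans h2')))
      by_cases h3 : ∃ q, ∀ p, S p q = 0
      · obtain ⟨q, hq⟩ := h3
        rw [mem3_iff]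
        left
        exact Matrix.det_eq_zero_of_column_eq_zero q hq
      by_cases h4 : ∃ q p, S p q ≠ 0 ∧ ∀ p', p' ≠ p → S p' q = 0
      · obtain ⟨q, p, _, h0⟩ := h4
        exact det_mem3_col_pivot S p q h0 (hmem p q)
          (ih (r ∘ p.succAbove) (c ∘ q.succAbove)
            (hr.comp (Fin.succAbove_right_injective))
            (hc.comp (Fin.succAbove_right_injective)))
      · -- every column has at least two nonzero entries: rows are linearly dependent
        push_neg at h3 h4
        set v : Fin (k+1) → ℤ := fun p => if ((r p).1.2 : ℕ) = n - 1 then 1 else -1 with hv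
        have hvne : v ≠ 0 := by
          intro h
          have := congrFun h 0
          simp only [hv, Pi.zero_apply] at this
          split_ifs at this <;> omega
        have hsum : ∀ q, ∑ p, v p * S p q = 0 := by
          intro q
          obtain ⟨p₀, hp₀⟩ := h3 q
          obtain ⟨p₁, hp₁ne, hp₁⟩ := h4 q p₀ hp₀
          -- exactly one of p₀, p₁ is row-type, the other column-type
          have hdiff : ¬(((r p₀).1.2 : ℕ) = n - 1 ↔ ((r p₁).1.2 : ℕ) = n - 1) := by
            intro hiff
            by_cases h : ((r p₀).1.2 : ℕ) = n - 1
            · exact hp₁ne (huniq_row p₁ p₀ q (hiff.mp h) h hp₁ hp₀)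
            · exact hp₁ne (huniq_col p₁ p₀ q (fun h' => h (hiff.mpr h')) h hp₁ hp₀)
          -- get the row-type one `pr` and column-type one `pc`
          obtain ⟨pr, pc, hprT, hpcT, hprnz, hpcnz, hprpc, hpair⟩ :
              ∃ pr pc, ((r pr).1.2 : ℕ) = n - 1 ∧ ((r pc).1.2 : ℕ) ≠ n - 1 ∧
                S pr q ≠ 0 ∧ S pc q ≠ 0 ∧ pr ≠ pc ∧ ({pr, pc} : Finset (Fin (k+1))) = {p₀, p₁} := by
            by_cases h : ((r p₀).1.2 : ℕ) = n - 1
            · exact ⟨p₀, p₁, h, fun h' => hdiff ⟨fun _ => h', fun _ => h⟩, hp₀, hp₁,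
                hp₁ne.symm, rfl⟩
            · refine ⟨p₁, p₀, ?_, h, hp₁, hp₀, hp₁ne, Finset.pair_comm _ _⟩
              by_contra h'
              exact hdiff ⟨fun h'' => absurd h'' h, fun h'' => absurd h'' h'⟩
          have hzero : ∀ p, p ≠ pr → p ≠ pc → S p q = 0 := by
            intro p hpr hpc
            by_contra hnz
            by_cases h : ((r p).1.2 : ℕ) = n - 1
            · exact hpr (huniq_row p pr q h hprT hnz hprnz)
            · exact hpc (huniq_col p pc q h hpcT hnz hpcnz)
          have hSpr : S pr q = -1 := by
            rw [hrowEnt pr q hprT] at hprnz ⊢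
            split_ifs at hprnz ⊢ with h
            · rfl
            · exact absurd rfl hprnz
          have hSpc : S pc q = -1 := by
            rw [hcolEnt pc q hpcT] at hpcnz ⊢
            split_ifs at hpcnz ⊢ with h
            · rfl
            · exact absurd rfl hpcnz
          have hsub : ∑ p, v p * S p q = ∑ p ∈ ({pr, pc} : Finset (Fin (k+1))), v p * S p q := by
            refine (Finset.sum_subset (Finset.subset_univ _) ?_).symm
            intro x _ hx
            simp only [Finset.mem_insert, Finset.mem_singleton, not_or] at hx
            rw [hzero x hx.1 hx.2, mul_zero]
          rw [hsub, Finset.sum_pair hprpc, hSpr, hSpc, hv]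
          simp only [if_pos hprT, if_neg hpcT]
          ring
        rw [mem3_iff]
        left
        apply Matrix.exists_vecMul_eq_zero_iff.mp
        refine ⟨v, hvne, ?_⟩
        funext q
        simpa [Matrix.vecMul, dotProduct] using hsum q

end TUaux

theorem stmt3 (n : ℕ) (hn : 2 ≤ n) (k : ℕ)
    (r : Fin k → {e : Fin n × Fin n // e.1 ≠ e.2})
    (c : Fin k → Fin (n - 1) × Fin (n - 1))
    (hr : Function.Injective r) (hc : Function.Injective c) :
    ((bigM n).submatrix r c).det ∈ ({0, 1, -1} : Set ℤ) := by
  exact TUaux.main n k r c hr hc
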